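/- Let Z ~ N(0, σ²) be a centered Gaussian with variance σ² > 0. Then for all r ≥ 0, sqrt(1 - exp(-r²/(2σ²))) ≤ P(|Z| ≤ r) ≤ sqrt(1 - exp(-2r²/(πσ²))). -/

import Mathlib

open MeasureTheory ProbabilityTheory Real Set

lemma my_interval_exp (v R : ℝ) (hv : 0 < v) :
    ∫ ρ in (0:ℝ)..R, ρ * Real.exp (-ρ^2 / (2*v)) = v * (1 - Real.exp (-R^2/(2*v))) := by
  have h : ∀ ρ : ℝ, HasDerivAt (fun ρ : ℝ => -v * Real.exp (-ρ^2/(2*v)))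
      (ρ * Real.exp (-ρ^2/(2*v))) ρ := by
    intro ρ
    have h1 : HasDerivAt (fun ρ : ℝ => -ρ^2/(2*v)) (-(2*ρ^1)/(2*v)) ρ := by
      simpa using ((hasDerivAt_pow 2 ρ).neg.div_const (2*v))
    have h2 := (h1.exp).const_mul (-v)
    refine h2.congr_deriv ?_
    field_simp
  rw [intervalIntegral.integral_eq_sub_of_hasDerivAt (fun ρ _ => h ρ)
    ((Continuous.intervalIntegrable (by fun_prop) _ _))]
  have : Real.exp (-(0:ℝ)^2/(2*v)) = 1 := by norm_num
  rw [this]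
  ring

lemma disk_polar (R : ℝ) (hR : 0 ≤ R) (g : ℝ → ℝ) :
    ∫ p : ℝ × ℝ in {q : ℝ × ℝ | q.1^2 + q.2^2 ≤ R^2}, g (p.1^2 + p.2^2)
      = (2*π) * ∫ ρ in (0:ℝ)..R, ρ * g (ρ^2) := by
  have hD : MeasurableSet {q : ℝ × ℝ | q.1^2 + q.2^2 ≤ R^2} :=
    (isClosed_le (by fun_prop) continuous_const).measurableSet
  rw [← integral_indicator hD, ← integral_comp_polarCoord_symm, polarCoord_target]
  have heq : EqOn
      (fun p : ℝ × ℝ => p.1 • Set.indicator {q : ℝ × ℝ | q.1^2 + q.2^2 ≤ R^2}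
        (fun q => g (q.1^2+q.2^2)) (polarCoord.symm p))
      (fun p : ℝ × ℝ =>
        (fun ρ => ρ * Set.indicator (Iic R) (fun ρ => g (ρ^2)) ρ) p.1 * (fun _ => (1:ℝ)) p.2)
      (Ioi (0:ℝ) ×ˢ Ioo (-π) π) := by
    rintro ⟨ρ, θ⟩ ⟨hρ, hθ⟩
    simp only [polarCoord_symm_apply, smul_eq_mul, mul_one]
    have hρ' : (0:ℝ) < ρ := hρ
    congr 1
    have hsq : (ρ * Real.cos θ)^2 + (ρ * Real.sin θ)^2 = ρ^2 := by
      rw [mul_pow, mul_pow, ← mul_add, Real.cos_sq_add_sin_sq, mul_one]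
    by_cases hle : ρ ≤ R
    · rw [Set.indicator_of_mem (show _ ∈ {q : ℝ × ℝ | q.1^2 + q.2^2 ≤ R^2} by
        show _ ≤ R^2; rw [hsq]; exact sq_le_sq' (by linarith) hle),
        Set.indicator_of_mem (show ρ ∈ Iic R from hle)]
      rw [hsq]
    · have hnot : (ρ * Real.cos θ, ρ * Real.sin θ) ∉ {q : ℝ × ℝ | q.1^2 + q.2^2 ≤ R^2} := by
        intro hmem
        apply hle
        have h2 : ρ^2 ≤ R^2 := by rw [← hsq]; exact hmem
        calc ρ ≤ |ρ| := le_abs_self ρ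
          _ ≤ R := abs_le_of_sq_le_sq h2 hR
      rw [Set.indicator_of_notMem hnot, Set.indicator_of_notMem (show ρ ∉ Iic R from hle)]
  rw [setIntegral_congr_fun (measurableSet_Ioi.prod measurableSet_Ioo) heq,
    Measure.volume_eq_prod]
  rw [setIntegral_prod_mul (μ := (volume : Measure ℝ)) (ν := (volume : Measure ℝ))
    (fun ρ : ℝ => ρ * Set.indicator (Iic R) (fun ρ => g (ρ^2)) ρ) (fun _ : ℝ => (1:ℝ))
    (Ioi 0) (Ioo (-π) π)]
  have h1 : ∫ θ in Ioo (-π) π, (1:ℝ) = 2*π := by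
    rw [setIntegral_const, measureReal_def, Real.volume_Ioo, smul_eq_mul, mul_one,
      ENNReal.toReal_ofReal (by linarith [Real.pi_pos])]
    ring
  rw [h1]
  have h2 : ∫ ρ in Ioi (0:ℝ), ρ * Set.indicator (Iic R) (fun ρ => g (ρ^2)) ρ
      = ∫ ρ in (0:ℝ)..R, ρ * g (ρ^2) := by
    have : EqOn (fun ρ : ℝ => ρ * Set.indicator (Iic R) (fun ρ => g (ρ^2)) ρ)
        (fun ρ : ℝ => Set.indicator (Iic R) (fun ρ => ρ * g (ρ^2)) ρ) (Ioi 0) := by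
      intro ρ _
      by_cases hle : ρ ∈ Iic R
      · simp [Set.indicator_of_mem hle]
      · simp [Set.indicator_of_notMem hle]
    rw [setIntegral_congr_fun measurableSet_Ioi this, setIntegral_indicator measurableSet_Iic,
      Set.Ioi_inter_Iic, intervalIntegral.integral_of_le hR]
  rw [h2]
  ring

theorem gaussian_abs_le_bounds (v : NNReal) (hv : v ≠ 0) (r : ℝ) (hr : 0 ≤ r) :
    Real.sqrt (1 - Real.exp (-(r ^ 2) / (2 * (v : ℝ)))) ≤
        (gaussianReal 0 v (Set.Icc (-r) r)).toReal ∧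
      (gaussianReal 0 v (Set.Icc (-r) r)).toReal ≤
        Real.sqrt (1 - Real.exp (-(2 * r ^ 2) / (π * (v : ℝ)))) := by
  have hv0 : (0:ℝ) < v := NNReal.coe_pos.mpr (pos_iff_ne_zero.mpr hv)
  have hπ := Real.pi_pos
  set φ : ℝ → ℝ := gaussianPDFReal 0 v with hφdef
  set P : ℝ := ∫ x in Icc (-r) r, φ x with hPdef
  set D : ℝ → Set (ℝ × ℝ) := fun R => {q : ℝ × ℝ | q.1^2 + q.2^2 ≤ R^2} with hDdef
  set S : Set (ℝ × ℝ) := Icc (-r) r ×ˢ Icc (-r) r with hSdef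
  have hDmeas : ∀ R : ℝ, MeasurableSet (D R) := fun R =>
    (isClosed_le (by fun_prop) continuous_const).measurableSet
  have hSmeas : MeasurableSet S := (measurableSet_Icc.prod measurableSet_Icc)
  have hprod : ∀ p : ℝ × ℝ, φ p.1 * φ p.2
      = (2*π*(v:ℝ))⁻¹ * Real.exp (-(p.1^2+p.2^2)/(2*(v:ℝ))) := by
    intro p
    simp only [hφdef, gaussianPDFReal, sub_zero]
    rw [mul_mul_mul_comm, ← Real.exp_add, ← mul_inv, Real.mul_self_sqrt (by positivity)]
    congr 1
    ring
  have hDsub : ∀ R : ℝ, D R ⊆ Icc (-|R|) |R| ×ˢ Icc (-|R|) |R| := by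
    intro R p hp
    have hp' : p.1^2 + p.2^2 ≤ R^2 := hp
    have h1 : p.1^2 ≤ |R|^2 := by rw [sq_abs]; nlinarith [sq_nonneg p.2]
    have h2 : p.2^2 ≤ |R|^2 := by rw [sq_abs]; nlinarith [sq_nonneg p.1]
    exact ⟨Set.mem_Icc.mpr (abs_le_of_sq_le_sq' h1 (abs_nonneg R)),
      Set.mem_Icc.mpr (abs_le_of_sq_le_sq' h2 (abs_nonneg R))⟩
  have hDfin : ∀ R : ℝ, volume (D R) ≠ ⊤ := by
    intro R
    refine ne_top_of_le_ne_top ?_ (measure_mono (hDsub R))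
    rw [Measure.volume_eq_prod, Measure.prod_prod, Real.volume_Icc]
    exact ENNReal.mul_ne_top ENNReal.ofReal_ne_top ENNReal.ofReal_ne_top
  have hSfin : volume S ≠ ⊤ := by
    rw [hSdef, Measure.volume_eq_prod, Measure.prod_prod, Real.volume_Icc]
    exact ENNReal.mul_ne_top ENNReal.ofReal_ne_top ENNReal.ofReal_ne_top
  have hf_int : Integrable (fun p : ℝ × ℝ => φ p.1 * φ p.2) := by
    have := (integrable_gaussianPDFReal 0 v).mul_prod (integrable_gaussianPDFReal 0 v)
    rwa [← Measure.volume_eq_prod] at this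
  have hf_nonneg : ∀ p : ℝ × ℝ, 0 ≤ φ p.1 * φ p.2 := fun p =>
    mul_nonneg (gaussianPDFReal_nonneg 0 v p.1) (gaussianPDFReal_nonneg 0 v p.2)
  have hP0 : 0 ≤ P := setIntegral_nonneg measurableSet_Icc
    (fun x _ => gaussianPDFReal_nonneg 0 v x)
  -- disk integral values
  have hdisk : ∀ R : ℝ, 0 ≤ R →
      ∫ p in D R, φ p.1 * φ p.2 = 1 - Real.exp (-R^2/(2*(v:ℝ))) := by
    intro R hR
    rw [setIntegral_congr_fun (hDmeas R) (fun p _ => hprod p), integral_const_mul]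
    have h := disk_polar R hR (fun t => Real.exp (-t/(2*(v:ℝ))))
    beta_reduce at h
    rw [h, my_interval_exp (v:ℝ) R hv0]
    field_simp
  have harea : ∀ R : ℝ, 0 ≤ R → (volume (D R)).toReal = π * R^2 := by
    intro R hR
    have h := disk_polar R hR (fun _ => (1:ℝ))
    beta_reduce at h
    simp only [mul_one] at h
    rw [setIntegral_const, measureReal_def, smul_eq_mul, mul_one, integral_id] at h
    show (volume {q : ℝ × ℝ | q.1^2 + q.2^2 ≤ R^2}).toReal = π * R^2
    rw [h]
    ring
  have hP2 : P^2 = ∫ p in S, φ p.1 * φ p.2 := by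
    calc P^2 = (∫ x in Icc (-r) r, φ x) * ∫ y in Icc (-r) r, φ y := by rw [sq]
      _ = ∫ p in S, φ p.1 * φ p.2 := by
          rw [hSdef, Measure.volume_eq_prod, setIntegral_prod_mul]
  -- lower bound
  have hlow : 1 - Real.exp (-(r^2)/(2*(v:ℝ))) ≤ P^2 := by
    rw [hP2, ← hdisk r hr]
    exact setIntegral_mono_set hf_int.integrableOn (ae_of_all _ hf_nonneg)
      ((hDsub r).trans (by rw [hSdef, abs_of_nonneg hr]) : D r ⊆ S).eventuallyLE
  -- upper bound
  set R₀ : ℝ := 2*r/Real.sqrt π with hR₀def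
  have hR₀ : 0 ≤ R₀ := by positivity
  have hR₀sq : R₀^2 = 4*r^2/π := by
    rw [hR₀def, div_pow, Real.sq_sqrt hπ.le]; ring
  have hSeq : volume S = ENNReal.ofReal (4*r^2) := by
    rw [hSdef, Measure.volume_eq_prod, Measure.prod_prod, Real.volume_Icc,
      ← ENNReal.ofReal_mul (by linarith)]
    congr 1; ring
  have hDeq : volume (D R₀) = ENNReal.ofReal (4*r^2) := by
    rw [← ENNReal.ofReal_toReal (hDfin R₀), harea R₀ hR₀, hR₀sq]
    congr 1
    field_simp
  have hδ : volume (S \ D R₀) = volume (D R₀ \ S) := by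
    have h1 := measure_inter_add_diff (μ := volume) S (hDmeas R₀)
    have h2 := measure_inter_add_diff (μ := volume) (D R₀) hSmeas
    rw [inter_comm] at h2
    have hfin : volume (S ∩ D R₀) ≠ ⊤ :=
      ne_top_of_le_ne_top hSfin (measure_mono inter_subset_left)
    have : volume (S ∩ D R₀) + volume (S \ D R₀)
        = volume (S ∩ D R₀) + volume (D R₀ \ S) := by
      rw [h1, h2, hSeq, hDeq]
    exact (ENNReal.add_right_inj hfin).mp this
  set f0 : ℝ := (2*π*(v:ℝ))⁻¹ * Real.exp (-R₀^2/(2*(v:ℝ))) with hf0def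
  have h_up : ∫ p in S \ D R₀, φ p.1 * φ p.2 ≤ f0 * (volume (S \ D R₀)).toReal := by
    have hconst : IntegrableOn (fun _ : ℝ × ℝ => f0) (S \ D R₀) volume :=
      integrableOn_const ((measure_mono diff_subset).trans_lt hSfin.lt_top).ne
    calc ∫ p in S \ D R₀, φ p.1 * φ p.2 ≤ ∫ _ in S \ D R₀, f0 := by
          refine setIntegral_mono_on hf_int.integrableOn hconst
            (hSmeas.diff (hDmeas R₀)) (fun p hp => ?_)
          rw [hprod p, hf0def]
          have hge : R₀^2 ≤ p.1^2 + p.2^2 := (not_le.mp hp.2).le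
          exact mul_le_mul_of_nonneg_left (Real.exp_le_exp.mpr
            ((div_le_div_iff_of_pos_right (by positivity)).mpr (by linarith))) (by positivity)
      _ = f0 * (volume (S \ D R₀)).toReal := by
          rw [setIntegral_const, measureReal_def, smul_eq_mul, mul_comm]
  have h_dn : f0 * (volume (D R₀ \ S)).toReal ≤ ∫ p in D R₀ \ S, φ p.1 * φ p.2 := by
    have hconst : IntegrableOn (fun _ : ℝ × ℝ => f0) (D R₀ \ S) volume :=
      integrableOn_const ((measure_mono diff_subset).trans_lt (hDfin R₀).lt_top).ne
    calc f0 * (volume (D R₀ \ S)).toReal = ∫ _ in D R₀ \ S, f0 := by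
          rw [setIntegral_const, measureReal_def, smul_eq_mul, mul_comm]
      _ ≤ ∫ p in D R₀ \ S, φ p.1 * φ p.2 := by
          refine setIntegral_mono_on hconst hf_int.integrableOn
            ((hDmeas R₀).diff hSmeas) (fun p hp => ?_)
          rw [hprod p, hf0def]
          have hle : p.1^2 + p.2^2 ≤ R₀^2 := hp.1
          exact mul_le_mul_of_nonneg_left (Real.exp_le_exp.mpr
            ((div_le_div_iff_of_pos_right (by positivity)).mpr (by linarith))) (by positivity)
  have hcompare : ∫ p in S, φ p.1 * φ p.2 ≤ ∫ p in D R₀, φ p.1 * φ p.2 := by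
    have e1 := integral_inter_add_diff (μ := volume) (s := S) (t := D R₀)
      (f := fun p : ℝ × ℝ => φ p.1 * φ p.2) (hDmeas R₀) hf_int.integrableOn
    have e2 := integral_inter_add_diff (μ := volume) (s := D R₀) (t := S)
      (f := fun p : ℝ × ℝ => φ p.1 * φ p.2) hSmeas hf_int.integrableOn
    rw [← e1, ← e2, inter_comm (D R₀) S]
    have := h_up.trans (le_of_le_of_eq (le_refl _) (by rw [hδ]) |>.trans h_dn)
    linarith
  have hup2 : P^2 ≤ 1 - Real.exp (-(2*r^2)/(π*(v:ℝ))) := by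
    have : -R₀^2/(2*(v:ℝ)) = -(2*r^2)/(π*(v:ℝ)) := by
      rw [hR₀sq]
      field_simp
      ring
    rw [hP2, ← this, ← hdisk R₀ hR₀]
    exact hcompare
  have hG : (gaussianReal 0 v (Icc (-r) r)).toReal = P := by
    rw [gaussianReal_apply_eq_integral 0 hv, ENNReal.toReal_ofReal hP0]
  constructor
  · rw [hG, ← Real.sqrt_sq hP0]
    exact Real.sqrt_le_sqrt hlow
  · rw [hG, ← Real.sqrt_sq hP0]
    exact Real.sqrt_le_sqrt hup2
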